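/- Let d ≥ 1, let f : ℝ^d → ℝ be continuously differentiable with L-Lipschitz-continuous gradient and f(x) ≥ 0 for all x ∈ ℝ^d. Let x₀ ∈ ℝ^d with f(x₀) > 0 and let ε > 0. Then the hypercube R₀ = {x ∈ ℝ^d : ‖x − x₀‖_∞ ≤ 2f(x₀)/ε} contains an ε-stationary point of f, i.e., there exists z ∈ R₀ with ‖∇f(z)‖₂ ≤ ε. -/

import Mathlib

open InnerProductSpace

lemma grad_descent_aux {F : Type*} [NormedAddCommGroup F] [InnerProductSpace ℝ F]
    [CompleteSpace F] (f : F → ℝ) (hf : ContDiff ℝ 1 f) (L : ℝ) (hL : 0 ≤ L)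
    (hgrad : ∀ x y, ‖gradient f x - gradient f y‖ ≤ L * ‖x - y‖)
    (x v : F) : f (x + v) ≤ f x + inner ℝ (gradient f x) v + L * ‖v‖ ^ 2 := by
  have hdiff : Differentiable ℝ f := hf.differentiable one_ne_zero
  have htd : ∀ z, (toDual ℝ F) (gradient f z) = fderiv ℝ f z := fun z =>
    (toDual ℝ F).apply_symm_apply _
  have key := (convex_segment x (x + v)).norm_image_sub_le_of_norm_hasFDerivWithin_le'
    (f' := fderiv ℝ f) (φ := fderiv ℝ f x) (C := L * ‖v‖)
    (fun z _ => (hdiff z).hasFDerivAt.hasFDerivWithinAt)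
    (fun z hz => by
      rw [← htd z, ← htd x, ← map_sub]
      rw [(toDual ℝ F).norm_map]
      refine (hgrad z x).trans ?_
      obtain ⟨a, b, ha, hb, hab, rfl⟩ := hz
      have : a • x + b • (x + v) - x = b • v := by
        rw [smul_add]
        rw [show a • x + (b • x + b • v) - x = (a + b) • x + b • v - x by module, hab]
        module
      rw [this]
      gcongr
      rw [norm_smul]
      calc ‖b‖ * ‖v‖ ≤ 1 * ‖v‖ := by
            gcongr
            rw [Real.norm_eq_abs, abs_of_nonneg hb]
            linarith
        _ = ‖v‖ := one_mul _)
    (left_mem_segment ℝ x (x + v)) (right_mem_segment ℝ x (x + v))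
  rw [add_sub_cancel_left] at key
  have h2 : fderiv ℝ f x v = inner ℝ (gradient f x) v := by rw [← htd x, toDual_apply_apply]
  have := (abs_le.mp (by rwa [Real.norm_eq_abs] at key)).2
  nlinarith [this]

lemma step_bounds {F : Type*} [NormedAddCommGroup F] [InnerProductSpace ℝ F]
    [CompleteSpace F] (f : F → ℝ) (hf : ContDiff ℝ 1 f) (L' : ℝ) (hL' : 0 < L')
    (hgrad' : ∀ x y, ‖gradient f x - gradient f y‖ ≤ L' * ‖x - y‖) (y : F) :
    f (y + (-(2 * L')⁻¹) • gradient f y) ≤ f y - ‖gradient f y‖ ^ 2 * (4 * L')⁻¹ ∧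
    ‖(y + (-(2 * L')⁻¹) • gradient f y) - y‖ = 2 * (4 * L')⁻¹ * ‖gradient f y‖ := by
  have hdesc := grad_descent_aux f hf L' hL'.le hgrad' y ((-(2 * L')⁻¹) • gradient f y)
  have hinner : (inner ℝ (gradient f y) ((-(2 * L')⁻¹) • gradient f y) : ℝ)
      = (-(2 * L')⁻¹) * ‖gradient f y‖ ^ 2 := by
    rw [real_inner_smul_right, real_inner_self_eq_norm_sq]
  have hnv : ‖(-(2 * L')⁻¹) • gradient f y‖ = (2 * L')⁻¹ * ‖gradient f y‖ := by
    rw [norm_smul, Real.norm_eq_abs, abs_neg, abs_of_nonneg (by positivity)]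
  have hL0 : L' ≠ 0 := hL'.ne'
  constructor
  · rw [hinner, hnv] at hdesc
    have harith : f y + (-(2 * L')⁻¹) * ‖gradient f y‖ ^ 2
        + L' * ((2 * L')⁻¹ * ‖gradient f y‖) ^ 2
        = f y - ‖gradient f y‖ ^ 2 * (4 * L')⁻¹ := by
      field_simp
      ring
    exact hdesc.trans harith.le
  · rw [add_sub_cancel_left, hnv]
    field_simp
    ring

lemma euclid_coord_le_norm {d : ℕ} (w : EuclideanSpace ℝ (Fin d)) (i : Fin d) :
    |w i| ≤ ‖w‖ := by
  rw [EuclideanSpace.norm_eq]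
  have h1 : ‖w i‖ ^ 2 ≤ ∑ j, ‖w j‖ ^ 2 :=
    Finset.single_le_sum (f := fun j => ‖w j‖ ^ 2) (fun j _ => sq_nonneg _) (Finset.mem_univ i)
  calc |w i| = Real.sqrt (‖w i‖ ^ 2) := by
        rw [Real.sqrt_sq (norm_nonneg _), Real.norm_eq_abs]
    _ ≤ _ := Real.sqrt_le_sqrt h1

/-- For a nonnegative continuously differentiable `f` with
`L`-Lipschitz gradient and `f(x₀) > 0`, the sup-norm box of radius `2f(x₀)/ε`
around `x₀` contains an `ε`-stationary point of `f`. -/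
theorem initial_box_contains_stationary_point
    (d : ℕ) (hd : 1 ≤ d) (L : ℝ)
    (f : EuclideanSpace ℝ (Fin d) → ℝ)
    (hf : ContDiff ℝ 1 f)
    (hgrad : ∀ x y : EuclideanSpace ℝ (Fin d),
      ‖gradient f x - gradient f y‖ ≤ L * ‖x - y‖)
    (hnonneg : ∀ x, 0 ≤ f x)
    (x₀ : EuclideanSpace ℝ (Fin d)) (hx₀ : 0 < f x₀)
    (ε : ℝ) (hε : 0 < ε) :
    ∃ z : EuclideanSpace ℝ (Fin d),
      (∀ i, |z i - x₀ i| ≤ 2 * f x₀ / ε) ∧ ‖gradient f z‖ ≤ ε := by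
  by_contra hcon
  push_neg at hcon
  set L' : ℝ := max L 1 with hL'def
  have hL' : 0 < L' := lt_of_lt_of_le one_pos (le_max_right _ _)
  have hgrad' : ∀ x y : EuclideanSpace ℝ (Fin d),
      ‖gradient f x - gradient f y‖ ≤ L' * ‖x - y‖ := fun x y =>
    (hgrad x y).trans (mul_le_mul_of_nonneg_right (le_max_left _ _) (norm_nonneg _))
  have hc : (0:ℝ) < (4 * L')⁻¹ := by positivity
  -- every point in the euclidean ball has big gradient
  have H : ∀ z : EuclideanSpace ℝ (Fin d), ‖z - x₀‖ ≤ 2 * f x₀ / ε →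
      ε < ‖gradient f z‖ := by
    intro z hz
    refine hcon z (fun i => ?_)
    have h1 : |(z - x₀) i| ≤ ‖z - x₀‖ := euclid_coord_le_norm _ i
    simpa using h1.trans hz
  set step : EuclideanSpace ℝ (Fin d) → EuclideanSpace ℝ (Fin d) :=
    fun y => y + (-(2 * L')⁻¹) • gradient f y with hstep
  have hstepP : ∀ y, f (step y) ≤ f y - ‖gradient f y‖ ^ 2 * (4 * L')⁻¹ ∧
      ‖step y - y‖ = 2 * (4 * L')⁻¹ * ‖gradient f y‖ := fun y =>
    step_bounds f hf L' hL' hgrad' y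
  set seq : ℕ → EuclideanSpace ℝ (Fin d) := fun n => step^[n] x₀ with hseq
  have hseq0 : seq 0 = x₀ := rfl
  have hseqS : ∀ n, seq (n + 1) = step (seq n) := fun n =>
    Function.iterate_succ_apply' step n x₀
  clear_value step seq
  clear hstep hseq
  have inv : ∀ n : ℕ, ε / 2 * ‖seq n - x₀‖ ≤ f x₀ - f (seq n) ∧
      f (seq n) ≤ f x₀ - n * (ε ^ 2 * (4 * L')⁻¹) := by
    intro n
    induction n with
    | zero => simp [hseq0]
    | succ n ih =>
      obtain ⟨h1, h2⟩ := ih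
      have hy0 : 0 ≤ f (seq n) := hnonneg (seq n)
      have hball : ‖seq n - x₀‖ ≤ 2 * f x₀ / ε := by
        rw [le_div_iff₀ hε]
        nlinarith [norm_nonneg (seq n - x₀)]
      have hgy : ε < ‖gradient f (seq n)‖ := H (seq n) hball
      obtain ⟨hdec, hlen⟩ := hstepP (seq n)
      have htri := dist_triangle (step (seq n)) (seq n) x₀
      rw [dist_eq_norm, dist_eq_norm, dist_eq_norm] at htri
      rw [hseqS n]
      have hG0 : 0 < ‖gradient f (seq n)‖ := lt_trans hε hgy
      constructor
      · have hkey : ε * ((4 * L')⁻¹ * ‖gradient f (seq n)‖)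
            ≤ ‖gradient f (seq n)‖ ^ 2 * (4 * L')⁻¹ :=
          by nlinarith [mul_nonneg (mul_nonneg hc.le hG0.le) (sub_nonneg.2 hgy.le)]
        nlinarith [mul_le_mul_of_nonneg_left htri (le_of_lt (half_pos hε)),
          mul_le_mul_of_nonneg_left hlen.le (le_of_lt (half_pos hε))]
      · have hε2 : ε ^ 2 * (4 * L')⁻¹ ≤ ‖gradient f (seq n)‖ ^ 2 * (4 * L')⁻¹ :=
          mul_le_mul_of_nonneg_right (pow_le_pow_left₀ hε.le hgy.le 2) hc.le
        push_cast
        nlinarith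
  obtain ⟨n, hn⟩ := exists_nat_gt (f x₀ / (ε ^ 2 * (4 * L')⁻¹))
  have hn' : f x₀ < n * (ε ^ 2 * (4 * L')⁻¹) := by
    rw [div_lt_iff₀ (by positivity)] at hn
    exact hn
  have := (inv n).2
  have := hnonneg (seq n)
  linarith
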